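/- Let X_1, X_2, … be finite nonnegative independent identically distributed real random variables whose common distribution is not concentrated on a single point, define S_n = ∑_{i=1}^n X_i, and fix c > 0. Then there exist constants δ > 0 and C > 0 such that for every ε ∈ (0,1) there exists a positive integer n ≤ C·(ln(1/ε) + 1) with the property that for every real t, if P(S_n < t) > ε then P(S_n < t − c) > δ·P(S_n < t). -/

import Mathlib

open MeasureTheory Set
open scoped ENNReal

namespace GapProof

variable {n : ℕ}

/-- The set of `x` whose "big" coordinates (those `> b`) are exactly `I`. -/
def patSet (b : ℝ) (I : Finset (Fin n)) : Set (Fin n → ℝ) :=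
  {x | ∀ i, b < x i ↔ i ∈ I}

/-- `patSet` intersected with `{∑ x < t}`. -/
def Epat (b : ℝ) (I : Finset (Fin n)) (t : ℝ) : Set (Fin n → ℝ) :=
  patSet b I ∩ {x | ∑ i, x i < t}

lemma measurable_sumFin : Measurable fun x : Fin n → ℝ => ∑ i, x i :=
  Finset.measurable_sum _ fun i _ => measurable_pi_apply i

lemma measurableSet_sumlt (t : ℝ) : MeasurableSet {x : Fin n → ℝ | ∑ i, x i < t} :=
  measurableSet_lt measurable_sumFin measurable_const

lemma measurableSet_patSet (b : ℝ) (I : Finset (Fin n)) : MeasurableSet (patSet b I) := by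
  have : patSet b I = ⋂ i, {x : Fin n → ℝ | b < x i ↔ i ∈ I} := by
    ext x; simp [patSet, Set.mem_iInter]
  rw [this]
  refine MeasurableSet.iInter fun i => ?_
  by_cases h : i ∈ I
  · simp only [h, iff_true]
    exact measurableSet_lt measurable_const (measurable_pi_apply i)
  · simp only [h, iff_false, not_lt]
    exact measurableSet_le (measurable_pi_apply i) measurable_const

lemma measurableSet_Epat (b : ℝ) (I : Finset (Fin n)) (t : ℝ) :
    MeasurableSet (Epat b I t) :=
  (measurableSet_patSet b I).inter (measurableSet_sumlt t)

lemma patSet_disjoint (b : ℝ) {I J : Finset (Fin n)} (h : I ≠ J) :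
    Disjoint (patSet b I) (patSet b J) := by
  rw [Set.disjoint_left]
  rintro x hxI hxJ
  exact h (by ext i; rw [← hxI i, ← hxJ i])

lemma Epat_disjoint (b : ℝ) {I J : Finset (Fin n)} (h : I ≠ J) (t t' : ℝ) :
    Disjoint (Epat b I t) (Epat b J t') :=
  ((patSet_disjoint b h).mono Set.inter_subset_left Set.inter_subset_left)

section Exch

variable (ν : Measure ℝ) [IsProbabilityMeasure ν]

/-- The product measure on `Fin n → ℝ`. -/
noncomputable def pim (n : ℕ) : Measure (Fin n → ℝ) := Measure.pi fun _ => ν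

instance : IsProbabilityMeasure (pim ν n) := by
  unfold pim; infer_instance

/-- Exchangeability: the measure of `Epat b I t` depends only on `I.card`. -/
lemma Epat_exch (b t : ℝ) {I J : Finset (Fin n)} (hIJ : I.card = J.card) :
    pim ν n (Epat b I t) = pim ν n (Epat b J t) := by
  classical
  have hcard : Fintype.card {x // x ∈ I} = Fintype.card {x // x ∈ J} := by
    simpa [Fintype.card_coe] using hIJ
  set e : {x // x ∈ I} ≃ {x // x ∈ J} := Fintype.equivOfCardEq hcard with he
  set σ : Equiv.Perm (Fin n) := e.extendSubtype with hσ
  have hmem : ∀ i : Fin n, i ∈ I ↔ σ i ∈ J := by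
    intro i
    constructor
    · exact fun h => e.extendSubtype_mem i h
    · intro h
      by_contra hi
      exact e.extendSubtype_not_mem i hi h
  have mp : MeasurePreserving (⇑(MeasurableEquiv.piCongrLeft (fun _ : Fin n => ℝ) σ))
      (pim ν n) (pim ν n) :=
    measurePreserving_piCongrLeft (fun _ : Fin n => ν) σ
  have hpre : (⇑(MeasurableEquiv.piCongrLeft (fun _ : Fin n => ℝ) σ)) ⁻¹' (Epat b J t)
      = Epat b I t := by
    ext x
    set y := (MeasurableEquiv.piCongrLeft (fun _ : Fin n => ℝ) σ) x with hy
    have hyx : ∀ i, y (σ i) = x i := fun i =>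
      MeasurableEquiv.piCongrLeft_apply_apply (β := fun _ => ℝ) σ x i
    have hsum : ∑ i, y i = ∑ i, x i := by
      rw [← Equiv.sum_comp σ (fun i => y i)]
      exact Finset.sum_congr rfl fun i _ => hyx i
    simp only [Set.mem_preimage, Epat, patSet, Set.mem_inter_iff, Set.mem_setOf_eq, ← hy, hsum]
    constructor
    · rintro ⟨h1, h2⟩
      exact ⟨fun i => by rw [← hyx i, h1 (σ i), ← hmem i], h2⟩
    · rintro ⟨h1, h2⟩
      refine ⟨fun i' => ?_, h2⟩
      obtain ⟨i, rfl⟩ := σ.surjective i'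
      rw [hyx i, h1 i, hmem i]
  calc pim ν n (Epat b I t) = pim ν n (Epat b J t) := by
        rw [← hpre, mp.measure_preimage (measurableSet_Epat b J t).nullMeasurableSet]

end Exch



/-- The finset of big coordinates of `x`. -/
noncomputable def bigOf (b : ℝ) (x : Fin n → ℝ) : Finset (Fin n) :=
  Finset.univ.filter (fun i => b < x i)

lemma mem_bigOf {b : ℝ} {x : Fin n → ℝ} {i : Fin n} : i ∈ bigOf b x ↔ b < x i := by
  simp [bigOf]

lemma patSet_eq_bigOf {b : ℝ} {I : Finset (Fin n)} {x : Fin n → ℝ}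
    (hx : x ∈ patSet (n := n) b I) : I = bigOf b x := by
  ext i; rw [mem_bigOf, hx i]

lemma mem_patSet_bigOf (b : ℝ) (x : Fin n → ℝ) : x ∈ patSet (n := n) b (bigOf b x) :=
  fun i => mem_bigOf.symm

/-- The union of all `Epat` with `I.card = j`. -/
def Ejset (b : ℝ) (j : ℕ) (t : ℝ) : Set (Fin n → ℝ) :=
  ⋃ I ∈ Finset.powersetCard j (Finset.univ : Finset (Fin n)), Epat b I t

lemma Ejset_eq (b : ℝ) (j : ℕ) (t : ℝ) :
    Ejset (n := n) b j t = {x | (bigOf b x).card = j ∧ ∑ i, x i < t} := by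
  ext x
  simp only [Ejset, Set.mem_iUnion, Set.mem_setOf_eq]
  constructor
  · rintro ⟨I, hI, hx⟩
    rw [Finset.mem_powersetCard] at hI
    obtain ⟨hp, hs⟩ := hx
    exact ⟨by rw [← patSet_eq_bigOf hp]; exact hI.2, hs⟩
  · rintro ⟨h1, h2⟩
    exact ⟨bigOf b x, by rw [Finset.mem_powersetCard]; exact ⟨Finset.subset_univ _, h1⟩,
      mem_patSet_bigOf b x, h2⟩

/-- Full-space version (no sum constraint). -/
def Fjset (b : ℝ) (j : ℕ) : Set (Fin n → ℝ) :=
  ⋃ I ∈ Finset.powersetCard j (Finset.univ : Finset (Fin n)), patSet b I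

lemma Ejset_subset_Fjset (b : ℝ) (j : ℕ) (t : ℝ) :
    Ejset (n := n) b j t ⊆ Fjset b j :=
  Set.iUnion₂_mono fun _ _ => Set.inter_subset_left

lemma sumlt_eq_biUnion (b t : ℝ) :
    {x : Fin n → ℝ | ∑ i, x i < t} = ⋃ j ∈ Finset.range (n + 1), Ejset b j t := by
  ext x
  simp only [Set.mem_iUnion, Set.mem_setOf_eq, Ejset_eq]
  constructor
  · intro hx
    refine ⟨(bigOf b x).card, ?_, rfl, hx⟩
    have : (bigOf b x).card ≤ n := by
      simpa using Finset.card_le_card (Finset.subset_univ (bigOf b x))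
    simpa [Finset.mem_range, Nat.lt_succ_iff]
  · rintro ⟨j, _, _, hx⟩; exact hx

section Meas
variable (ν : Measure ℝ) [IsProbabilityMeasure ν]

lemma measurableSet_Ejset (b : ℝ) (j : ℕ) (t : ℝ) :
    MeasurableSet (Ejset (n := n) b j t) :=
  (Finset.powersetCard j Finset.univ).measurableSet_biUnion
    fun I _ => measurableSet_Epat b I t

lemma pim_Ejset (b t : ℝ) {j : ℕ} {I : Finset (Fin n)} (hI : I.card = j) :
    pim ν n (Ejset b j t) = (n.choose j : ℝ≥0∞) * pim ν n (Epat b I t) := by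
  classical
  rw [Ejset, measure_biUnion_finset ?disj (fun J _ => measurableSet_Epat b J t)]
  case disj =>
    intro J hJ J' hJ' hne
    exact (Epat_disjoint b hne t t).mono le_rfl le_rfl
  rw [Finset.sum_congr rfl (fun J hJ => ?_), Finset.sum_const, Finset.card_powersetCard,
    Finset.card_univ, Fintype.card_fin, nsmul_eq_mul]
  rw [Finset.mem_powersetCard] at hJ
  exact Epat_exch ν b t (hJ.2.trans hI.symm)

lemma pim_patSet (b : ℝ) (I : Finset (Fin n)) :
    pim ν n (patSet b I) = ν (Set.Ioi b) ^ I.card * ν (Set.Iic b) ^ (n - I.card) := by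
  classical
  have hset : patSet (n := n) b I =
      Set.univ.pi (fun i => if i ∈ I then Set.Ioi b else Set.Iic b) := by
    ext x
    simp only [patSet, Set.mem_setOf_eq, Set.mem_pi, Set.mem_univ, forall_true_left]
    refine forall_congr' fun i => ?_
    by_cases h : i ∈ I <;> simp [h, Set.mem_Ioi, Set.mem_Iic, not_lt]
  rw [hset, pim, Measure.pi_pi]
  have : ∀ i : Fin n, ν (if i ∈ I then Set.Ioi b else Set.Iic b)
      = if i ∈ I then ν (Set.Ioi b) else ν (Set.Iic b) := fun i => by
    by_cases h : i ∈ I <;> simp [h]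
  rw [Finset.prod_congr rfl fun i _ => this i,
    ← Finset.prod_filter_mul_prod_filter_not Finset.univ (· ∈ I)]
  have h1 : Finset.univ.filter (· ∈ I) = I := by ext i; simp
  have h2 : Finset.univ.filter (fun x => ¬ x ∈ I) = Iᶜ := by ext i; simp
  congr 1
  · rw [h1, Finset.prod_congr rfl (fun i hi => if_pos hi), Finset.prod_const]
  · rw [h2, Finset.prod_congr rfl (fun i hi => if_neg (Finset.mem_compl.mp hi)),
      Finset.prod_const, Finset.card_compl, Fintype.card_fin]

lemma pim_Fjset (b : ℝ) (j : ℕ) :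
    pim ν n (Fjset b j)
      = (n.choose j : ℝ≥0∞) * (ν (Set.Ioi b) ^ j * ν (Set.Iic b) ^ (n - j)) := by
  classical
  rw [Fjset, measure_biUnion_finset ?disj (fun J _ => measurableSet_patSet b J)]
  case disj =>
    intro J hJ J' hJ' hne
    exact patSet_disjoint b hne
  rw [Finset.sum_congr rfl (fun J hJ => ?_), Finset.sum_const, Finset.card_powersetCard,
    Finset.card_univ, Fintype.card_fin, nsmul_eq_mul]
  rw [Finset.mem_powersetCard] at hJ
  rw [pim_patSet, hJ.2]

lemma measurableSet_Fjset (b : ℝ) (j : ℕ) : MeasurableSet (Fjset (n := n) b j) :=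
  (Finset.powersetCard j Finset.univ).measurableSet_biUnion
    fun I _ => measurableSet_patSet b I

lemma pim_sumlt_eq (b t : ℝ) :
    pim ν n {x | ∑ i, x i < t} = ∑ j ∈ Finset.range (n + 1), pim ν n (Ejset b j t) := by
  classical
  rw [sumlt_eq_biUnion b t, measure_biUnion_finset ?disj (fun j _ => measurableSet_Ejset b j t)]
  case disj =>
    intro j hj j' hj' hne
    show Disjoint (Ejset b j t) (Ejset b j' t)
    rw [Set.disjoint_left]
    rintro x hx hx'
    rw [Ejset_eq] at hx hx'
    exact hne (hx.1.symm.trans hx'.1)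

end Meas
/-- Initial segment `{i : Fin n | i.val < j}`. -/
def iniSeg (n j : ℕ) : Finset (Fin n) := Finset.univ.filter (fun i => (i : ℕ) < j)

lemma mem_iniSeg {n j : ℕ} {i : Fin n} : i ∈ iniSeg n j ↔ (i : ℕ) < j := by
  simp [iniSeg]

lemma card_iniSeg {n j : ℕ} (hj : j ≤ n) : (iniSeg n j).card = j := by
  classical
  have : iniSeg n j = Finset.map (Fin.castLEEmb hj) Finset.univ := by
    ext i
    simp only [mem_iniSeg, Finset.mem_map, Finset.mem_univ, true_and]
    constructor
    · intro h; exact ⟨⟨(i : ℕ), h⟩, by ext; simp⟩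
    · rintro ⟨a, rfl⟩; simpa using a.isLt
  rw [this, Finset.card_map, Finset.card_univ, Fintype.card_fin]

section Swap

variable (ν : Measure ℝ) [IsProbabilityMeasure ν]

lemma swap_step {m : ℕ} {a b : ℝ} (hab : a < b) {j : ℕ} (hj : j ≤ m) (t : ℝ) :
    ν (Set.Iio a) * pim ν (m + 1) (Epat b (iniSeg (m + 1) (j + 1)) t)
      ≤ ν (Set.Ioi b) * pim ν (m + 1) (Epat b (iniSeg (m + 1) j) (t - (b - a))) := by
  classical
  set i₀ : Fin (m + 1) := ⟨j, Nat.lt_succ_of_le hj⟩ with hi₀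
  set T := MeasurableEquiv.piFinSuccAbove (fun _ : Fin (m + 1) => ℝ) i₀ with hT
  have mp : MeasurePreserving (⇑T) (pim ν (m + 1)) (ν.prod (pim ν m)) :=
    measurePreserving_piFinSuccAbove (fun _ : Fin (m + 1) => ν) i₀
  set G : Set (Fin m → ℝ) :=
    Epat b (Finset.univ.filter fun l : Fin m => ((i₀.succAbove l : ℕ) < j)) (t - b) with hG
  have hmeasG : MeasurableSet G := measurableSet_Epat _ _ _
  have hTx : ∀ x : Fin (m + 1) → ℝ, ⇑T x = (x i₀, fun l => x (i₀.succAbove l)) := by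
    intro x
    refine Prod.ext ?_ ?_
    · simp [hT, MeasurableEquiv.piFinSuccAbove_apply]
    · funext l
      simp [hT, MeasurableEquiv.piFinSuccAbove_apply, Fin.removeNth]
  have hsum : ∀ x : Fin (m + 1) → ℝ, ∑ i, x i = x i₀ + ∑ l, x (i₀.succAbove l) :=
    fun x => Fin.sum_univ_succAbove x i₀
  have hvalne : ∀ l : Fin m, ((i₀.succAbove l : ℕ)) ≠ j := by
    intro l h
    exact (Fin.succAbove_ne i₀ l) (by apply Fin.ext; simpa [hi₀] using h)
  have claimA : Epat b (iniSeg (m + 1) (j + 1)) t ⊆ ⇑T ⁻¹' (Set.Ioi b ×ˢ G) := by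
    rintro x ⟨h1, h2⟩
    simp only [patSet, Set.mem_setOf_eq] at h1
    have hbig : b < x i₀ := (h1 i₀).mpr (by simp [mem_iniSeg, hi₀])
    have h2' : ∑ i, x i < t := h2
    rw [Set.mem_preimage, hTx x, Set.mem_prod]
    refine ⟨hbig, ⟨?_, ?_⟩⟩
    · intro l
      rw [Finset.mem_filter]
      have hi := h1 (i₀.succAbove l)
      rw [mem_iniSeg] at hi
      have hne := hvalne l
      constructor
      · intro hb
        have h3 := hi.mp hb
        exact ⟨Finset.mem_univ _, by omega⟩
      · rintro ⟨-, hlt⟩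
        exact hi.mpr (by omega)
    · simp only [Set.mem_setOf_eq]
      have h4 := hsum x
      linarith
  have claimB : ⇑T ⁻¹' (Set.Iio a ×ˢ G) ⊆ Epat b (iniSeg (m + 1) j) (t - (b - a)) := by
    intro x hx
    rw [Set.mem_preimage, hTx x, Set.mem_prod] at hx
    obtain ⟨hx0, hpat, hs⟩ := hx
    simp only [Set.mem_Iio] at hx0
    simp only [patSet, Set.mem_setOf_eq] at hpat
    simp only [Set.mem_setOf_eq] at hs
    constructor
    · intro i
      rcases eq_or_ne i i₀ with rfl | hne
      · rw [mem_iniSeg]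
        simp only [hi₀]
        constructor
        · intro hb; exact absurd hb (not_lt.mpr (le_of_lt (lt_trans hx0 hab)))
        · intro hb; exact absurd hb (by omega)
      · obtain ⟨l, rfl⟩ := Fin.exists_succAbove_eq hne
        have := hpat l
        rw [Finset.mem_filter] at this
        rw [mem_iniSeg]
        constructor
        · intro hb; exact (this.mp hb).2
        · intro hb; exact this.mpr ⟨Finset.mem_univ _, hb⟩
    · show ∑ i, x i < t - (b - a)
      have h4 := hsum x
      linarith
  calc ν (Set.Iio a) * pim ν (m + 1) (Epat b (iniSeg (m + 1) (j + 1)) t)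
      ≤ ν (Set.Iio a) * pim ν (m + 1) (⇑T ⁻¹' (Set.Ioi b ×ˢ G)) :=
        mul_le_mul_right (measure_mono claimA) _
    _ = ν (Set.Iio a) * (ν.prod (pim ν m)) (Set.Ioi b ×ˢ G) := by
        rw [mp.measure_preimage (measurableSet_Ioi.prod hmeasG).nullMeasurableSet]
    _ = ν (Set.Ioi b) * (ν (Set.Iio a) * pim ν m G) := by
        rw [Measure.prod_prod]; ring
    _ = ν (Set.Ioi b) * (ν.prod (pim ν m)) (Set.Iio a ×ˢ G) := by
        rw [Measure.prod_prod]
    _ = ν (Set.Ioi b) * pim ν (m + 1) (⇑T ⁻¹' (Set.Iio a ×ˢ G)) := by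
        rw [mp.measure_preimage (measurableSet_Iio.prod hmeasG).nullMeasurableSet]
    _ ≤ ν (Set.Ioi b) * pim ν (m + 1) (Epat b (iniSeg (m + 1) j) (t - (b - a))) :=
        mul_le_mul_right (measure_mono claimB) _

end Swap

/-! ### Chernoff-type bound (purely real) -/

lemma chernoff_real {n m₀ : ℕ} {qq : ℝ} (hq0 : 0 ≤ qq) (hq1 : qq ≤ 1)
    (hm : (m₀ : ℝ) ≤ qq * n / 2) (hmn : m₀ ≤ n) :
    ∑ j ∈ Finset.range (m₀ + 1), (n.choose j : ℝ) * qq ^ j * (1 - qq) ^ (n - j)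
      ≤ Real.exp (-(qq * n) / 12) := by
  set pp : ℝ := 1 - qq with hpp
  have hpp0 : 0 ≤ pp := by simp [hpp]; linarith
  have hS : (3/4 : ℝ) ^ m₀ * ∑ j ∈ Finset.range (m₀ + 1), (n.choose j : ℝ) * qq ^ j * pp ^ (n - j)
      ≤ (pp + 3/4 * qq) ^ n := by
    rw [Finset.mul_sum]
    have hstep : ∀ j ∈ Finset.range (m₀ + 1),
        (3/4 : ℝ) ^ m₀ * ((n.choose j : ℝ) * qq ^ j * pp ^ (n - j))
          ≤ (3/4 * qq) ^ j * pp ^ (n - j) * (n.choose j : ℝ) := by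
      intro j hj
      rw [Finset.mem_range, Nat.lt_succ_iff] at hj
      have h34 : (3/4 : ℝ) ^ m₀ ≤ (3/4) ^ j :=
        pow_le_pow_of_le_one (by norm_num) (by norm_num) hj
      have hrest : (0:ℝ) ≤ (n.choose j : ℝ) * qq ^ j * pp ^ (n - j) :=
        mul_nonneg (mul_nonneg (Nat.cast_nonneg _) (pow_nonneg hq0 _)) (pow_nonneg hpp0 _)
      calc (3/4 : ℝ) ^ m₀ * ((n.choose j : ℝ) * qq ^ j * pp ^ (n - j))
          ≤ (3/4) ^ j * ((n.choose j : ℝ) * qq ^ j * pp ^ (n - j)) :=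
            mul_le_mul_of_nonneg_right h34 hrest
        _ = (3/4 * qq) ^ j * pp ^ (n - j) * (n.choose j : ℝ) := by
            rw [mul_pow]; ring
    refine le_trans (Finset.sum_le_sum hstep) ?_
    have hsub : ∑ j ∈ Finset.range (m₀ + 1), (3/4 * qq) ^ j * pp ^ (n - j) * (n.choose j : ℝ)
        ≤ ∑ j ∈ Finset.range (n + 1), (3/4 * qq) ^ j * pp ^ (n - j) * (n.choose j : ℝ) := by
      refine Finset.sum_le_sum_of_subset_of_nonneg ?_ ?_
      · exact Finset.range_subset_range.mpr (by omega)
      · intro j _ _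
        exact mul_nonneg (mul_nonneg (pow_nonneg (by linarith) _) (pow_nonneg hpp0 _))
          (Nat.cast_nonneg _)
    refine le_trans hsub ?_
    have hap : (pp + 3/4 * qq) ^ n
        = ∑ j ∈ Finset.range (n + 1), (3/4 * qq) ^ j * pp ^ (n - j) * (n.choose j : ℝ) := by
      rw [add_comm]; exact add_pow _ _ n
    rw [hap]
  -- now bound `(pp + 3/4*qq)^n = (1 - qq/4)^n ≤ exp (-qq*n/4)`
  have h1 : (pp + 3/4 * qq) = 1 - qq/4 := by rw [hpp]; ring
  have h2 : (1 - qq/4 : ℝ) ≤ Real.exp (-(qq/4)) := by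
    have := Real.add_one_le_exp (-(qq/4))
    linarith
  have h2n : (pp + 3/4 * qq) ^ n ≤ Real.exp (-(qq/4)) ^ n := by
    rw [h1]
    exact pow_le_pow_left₀ (by linarith) h2 n
  have h3 : Real.exp (-(qq/4)) ^ n = Real.exp (-(qq * n) / 4) := by
    rw [← Real.exp_nat_mul]; ring_nf
  -- and `(4/3)^{m₀} ≤ exp (m₀/3) ≤ exp (qq*n/6)`
  have h4 : (1 : ℝ) ≤ (3/4 : ℝ)⁻¹ := by norm_num
  have hS' : ∑ j ∈ Finset.range (m₀ + 1), (n.choose j : ℝ) * qq ^ j * pp ^ (n - j)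
      ≤ (4/3 : ℝ) ^ m₀ * Real.exp (-(qq * n) / 4) := by
    have hpow : (0:ℝ) < (3/4 : ℝ) ^ m₀ := pow_pos (by norm_num) _
    rw [← h3]
    have := le_trans hS h2n
    calc ∑ j ∈ Finset.range (m₀ + 1), (n.choose j : ℝ) * qq ^ j * pp ^ (n - j)
        = ((3/4 : ℝ) ^ m₀)⁻¹ * ((3/4 : ℝ) ^ m₀ *
            ∑ j ∈ Finset.range (m₀ + 1), (n.choose j : ℝ) * qq ^ j * pp ^ (n - j)) := by
          field_simp
      _ ≤ ((3/4 : ℝ) ^ m₀)⁻¹ * Real.exp (-(qq/4)) ^ n := by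
          exact mul_le_mul_of_nonneg_left this (by positivity)
      _ = (4/3 : ℝ) ^ m₀ * Real.exp (-(qq/4)) ^ n := by
          rw [← inv_pow]; norm_num
  have h5 : (4/3 : ℝ) ^ m₀ ≤ Real.exp ((qq * n) / 6) := by
    have h43 : (4/3 : ℝ) ≤ Real.exp (1/3) := by
      have := Real.add_one_le_exp (1/3 : ℝ)
      linarith
    calc (4/3 : ℝ) ^ m₀ ≤ Real.exp (1/3) ^ m₀ :=
          pow_le_pow_left₀ (by norm_num) h43 m₀
      _ = Real.exp (m₀ / 3) := by rw [← Real.exp_nat_mul]; ring_nf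
      _ ≤ Real.exp ((qq * n) / 6) := by
          rw [Real.exp_le_exp]; linarith
  calc ∑ j ∈ Finset.range (m₀ + 1), (n.choose j : ℝ) * qq ^ j * pp ^ (n - j)
      ≤ (4/3 : ℝ) ^ m₀ * Real.exp (-(qq * n) / 4) := hS'
    _ ≤ Real.exp ((qq * n) / 6) * Real.exp (-(qq * n) / 4) := by
        exact mul_le_mul_of_nonneg_right h5 (Real.exp_nonneg _)
    _ = Real.exp (-(qq * n) / 12) := by
        rw [← Real.exp_add]; ring_nf


section Chain

variable (ν : Measure ℝ) [IsProbabilityMeasure ν]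

lemma Ejset_step {n : ℕ} {a b : ℝ} (hab : a < b) {j : ℕ} (hj1 : 1 ≤ j) (hjn : j ≤ n) (t : ℝ)
    (hC : ν (Set.Ioi b) * ((n - j + 1 : ℕ) : ℝ≥0∞) ≤ 4 * ((j : ℕ) : ℝ≥0∞)) :
    ν (Set.Iio a) * pim ν n (Ejset b j t)
      ≤ 4 * pim ν n (Ejset b (j - 1) (t - (b - a))) := by
  obtain ⟨m, rfl⟩ : ∃ m, n = m + 1 := ⟨n - 1, by omega⟩
  obtain ⟨i, rfl⟩ : ∃ i, j = i + 1 := ⟨j - 1, by omega⟩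
  have him : i ≤ m := by omega
  have e1 := pim_Ejset ν b t (card_iniSeg (n := m + 1) (j := i + 1) hjn)
  have e2 := pim_Ejset ν b (t - (b - a)) (card_iniSeg (n := m + 1) (j := i) (by omega))
  have hsw := swap_step ν hab him t
  have hsub : m + 1 - (i + 1) + 1 = m + 1 - i := by omega
  rw [hsub] at hC
  have hchoose : ((m + 1).choose (i + 1)) * (i + 1) = ((m + 1).choose i) * (m + 1 - i) :=
    Nat.choose_succ_right_eq (m + 1) i
  have hCq : ν (Set.Ioi b) * (((m + 1).choose (i + 1) : ℕ) : ℝ≥0∞)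
      ≤ 4 * (((m + 1).choose i : ℕ) : ℝ≥0∞) := by
    have hcc : (ν (Set.Ioi b) * (((m + 1).choose (i + 1) : ℕ) : ℝ≥0∞)) * (((i + 1 : ℕ)) : ℝ≥0∞)
        ≤ (4 * (((m + 1).choose i : ℕ) : ℝ≥0∞)) * (((i + 1 : ℕ)) : ℝ≥0∞) := by
      have l1 : ((((m + 1).choose (i + 1) : ℕ)) : ℝ≥0∞) * (((i + 1 : ℕ)) : ℝ≥0∞)
          = ((((m + 1).choose i : ℕ)) : ℝ≥0∞) * (((m + 1 - i : ℕ)) : ℝ≥0∞) := by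
        rw [← Nat.cast_mul, ← Nat.cast_mul, hchoose]
      calc (ν (Set.Ioi b) * (((m + 1).choose (i + 1) : ℕ) : ℝ≥0∞)) * (((i + 1 : ℕ)) : ℝ≥0∞)
          = ν (Set.Ioi b) * (((((m + 1).choose (i + 1) : ℕ)) : ℝ≥0∞) * (((i + 1 : ℕ)) : ℝ≥0∞)) := by
            ring
        _ = ((((m + 1).choose i : ℕ)) : ℝ≥0∞) * (ν (Set.Ioi b) * (((m + 1 - i : ℕ)) : ℝ≥0∞)) := by
            rw [l1]; ring
        _ ≤ ((((m + 1).choose i : ℕ)) : ℝ≥0∞) * (4 * (((i + 1 : ℕ)) : ℝ≥0∞)) :=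
            mul_le_mul_right hC _
        _ = (4 * (((m + 1).choose i : ℕ) : ℝ≥0∞)) * (((i + 1 : ℕ)) : ℝ≥0∞) := by ring
    exact (ENNReal.mul_le_mul_iff_left (by exact_mod_cast Nat.succ_ne_zero i)
      (ENNReal.natCast_ne_top (i + 1))).mp hcc
  have hgoal : (i + 1) - 1 = i := by omega
  rw [hgoal]
  calc ν (Set.Iio a) * pim ν (m + 1) (Ejset b (i + 1) t)
      = (((m + 1).choose (i + 1) : ℕ) : ℝ≥0∞)
          * (ν (Set.Iio a) * pim ν (m + 1) (Epat b (iniSeg (m + 1) (i + 1)) t)) := by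
        rw [e1]; ring
    _ ≤ (((m + 1).choose (i + 1) : ℕ) : ℝ≥0∞)
          * (ν (Set.Ioi b) * pim ν (m + 1) (Epat b (iniSeg (m + 1) i) (t - (b - a)))) :=
        mul_le_mul_right hsw _
    _ = (ν (Set.Ioi b) * (((m + 1).choose (i + 1) : ℕ) : ℝ≥0∞))
          * pim ν (m + 1) (Epat b (iniSeg (m + 1) i) (t - (b - a))) := by ring
    _ ≤ (4 * (((m + 1).choose i : ℕ) : ℝ≥0∞))
          * pim ν (m + 1) (Epat b (iniSeg (m + 1) i) (t - (b - a))) :=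
        mul_le_mul_left hCq _
    _ = 4 * pim ν (m + 1) (Ejset b i (t - (b - a))) := by rw [e2]; ring

lemma Ejset_chain {n : ℕ} {a b : ℝ} (hab : a < b) (k : ℕ) {j : ℕ} (t : ℝ)
    (hkj : k ≤ j)
    (hgood : ∀ j', j - k + 1 ≤ j' → j' ≤ j →
      1 ≤ j' ∧ j' ≤ n ∧ ν (Set.Ioi b) * ((n - j' + 1 : ℕ) : ℝ≥0∞) ≤ 4 * ((j' : ℕ) : ℝ≥0∞)) :
    ν (Set.Iio a) ^ k * pim ν n (Ejset b j t)
      ≤ 4 ^ k * pim ν n (Ejset b (j - k) (t - (k : ℝ) * (b - a))) := by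
  induction k with
  | zero => simp
  | succ k ih =>
    have hkj' : k ≤ j := by omega
    have ihh := ih hkj' (fun j' h1 h2 => hgood j' (by omega) h2)
    obtain ⟨hg1, hg2, hg3⟩ := hgood (j - k) (by omega) (by omega)
    have hstep := Ejset_step ν hab hg1 hg2 (t - (k : ℝ) * (b - a)) hg3
    calc ν (Set.Iio a) ^ (k + 1) * pim ν n (Ejset b j t)
        = ν (Set.Iio a) * (ν (Set.Iio a) ^ k * pim ν n (Ejset b j t)) := by ring
      _ ≤ ν (Set.Iio a) * (4 ^ k * pim ν n (Ejset b (j - k) (t - (k : ℝ) * (b - a)))) :=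
          mul_le_mul_right ihh _
      _ = 4 ^ k * (ν (Set.Iio a) * pim ν n (Ejset b (j - k) (t - (k : ℝ) * (b - a)))) := by ring
      _ ≤ 4 ^ k * (4 * pim ν n (Ejset b (j - k - 1) (t - (k : ℝ) * (b - a) - (b - a)))) :=
          mul_le_mul_right hstep _
      _ = 4 ^ (k + 1) * pim ν n (Ejset b (j - (k + 1)) (t - ((k : ℕ) + 1 : ℝ) * (b - a))) := by
          have h1 : j - k - 1 = j - (k + 1) := by omega
          have h2 : t - (k : ℝ) * (b - a) - (b - a) = t - ((k : ℕ) + 1 : ℝ) * (b - a) := by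
            push_cast; ring
          rw [h1, h2]; ring
      _ = 4 ^ (k + 1) * pim ν n (Ejset b (j - (k + 1)) (t - ((k + 1 : ℕ) : ℝ) * (b - a))) := by
          norm_num

end Chain

section Key

variable (ν : Measure ℝ) [IsProbabilityMeasure ν]

lemma key_ineq {a b c : ℝ} (hab : a < b) {k : ℕ} (hc : c ≤ (k : ℝ) * (b - a))
    {n : ℕ} (hn : 8 * ((k : ℝ) + 1) ≤ (ν (Set.Ioi b)).toReal * n) (t : ℝ) :
    ν (Set.Iio a) ^ k * pim ν n {x | ∑ i, x i < t}
      ≤ ν (Set.Iio a) ^ k * ENNReal.ofReal (Real.exp (-((ν (Set.Ioi b)).toReal * n) / 12))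
        + 4 ^ k * pim ν n {x | ∑ i, x i < t - c} := by
  classical
  set q : ℝ≥0∞ := ν (Set.Ioi b) with hqdef
  set qq : ℝ := q.toReal with hqqdef
  have hq_ne_top : q ≠ ∞ := measure_ne_top ν _
  have hqq0 : 0 ≤ qq := ENNReal.toReal_nonneg
  have hq1 : q ≤ 1 := prob_le_one
  have hqq1 : qq ≤ 1 := by
    have := ENNReal.toReal_mono (by norm_num) hq1
    simpa using this
  set m₀ : ℕ := Nat.floor (qq * n / 2) with hm₀def
  have hm₀r : (m₀ : ℝ) ≤ qq * n / 2 := Nat.floor_le (by positivity)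
  have hm₀r2 : qq * n / 2 < (m₀ : ℝ) + 1 := Nat.lt_floor_add_one _
  have hm₀n : m₀ ≤ n := by
    have h1 : qq * n / 2 ≤ (n : ℝ) := by nlinarith [Nat.cast_nonneg (α := ℝ) n]
    calc m₀ ≤ ⌊(n : ℝ)⌋₊ := Nat.floor_le_floor h1
      _ = n := Nat.floor_natCast n
  have hkm₀ : k ≤ m₀ := by
    have : (k : ℝ) < (m₀ : ℝ) := by nlinarith
    exact_mod_cast this.le
  -- the goodness condition for the chain
  have hgood : ∀ j, m₀ + 1 ≤ j → j ≤ n → ∀ j', j - k + 1 ≤ j' → j' ≤ j →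
      1 ≤ j' ∧ j' ≤ n ∧ q * ((n - j' + 1 : ℕ) : ℝ≥0∞) ≤ 4 * ((j' : ℕ) : ℝ≥0∞) := by
    intro j hj1 hj2 j' hj'1 hj'2
    have h1 : 1 ≤ j' := by omega
    have h2 : j' ≤ n := by omega
    refine ⟨h1, h2, ?_⟩
    -- real inequality
    have hj'k : m₀ + 2 ≤ j' + k := by omega
    have hj'r : (m₀ : ℝ) + 2 ≤ (j' : ℝ) + (k : ℝ) := by exact_mod_cast hj'k
    have hreal : qq * ((n - j' + 1 : ℕ) : ℝ) ≤ 4 * (j' : ℝ) := by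
      have hc1 : ((n - j' + 1 : ℕ) : ℝ) = (n : ℝ) - (j' : ℝ) + 1 := by
        push_cast [Nat.cast_sub h2]; ring
      rw [hc1]
      have hb1 : qq * ((n : ℝ) - (j' : ℝ) + 1) ≤ qq * ((n : ℝ) + 1) := by
        have : (n : ℝ) - (j' : ℝ) + 1 ≤ (n : ℝ) + 1 := by
          have : (0:ℝ) ≤ (j' : ℝ) := Nat.cast_nonneg _
          linarith
        exact mul_le_mul_of_nonneg_left this hqq0
      have hb2 : qq * ((n : ℝ) + 1) = qq * (n : ℝ) + qq := by ring
      -- 4 j' ≥ qq n + qq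
      have hb3 : qq * (n : ℝ) + qq ≤ 4 * (j' : ℝ) := by
        nlinarith
      linarith
    -- transfer to ℝ≥0∞
    have hqofReal : q = ENNReal.ofReal qq := (ENNReal.ofReal_toReal hq_ne_top).symm
    calc q * ((n - j' + 1 : ℕ) : ℝ≥0∞)
        = ENNReal.ofReal (qq * ((n - j' + 1 : ℕ) : ℝ)) := by
          rw [ENNReal.ofReal_mul hqq0, ← hqofReal, ENNReal.ofReal_natCast]
      _ ≤ ENNReal.ofReal (4 * (j' : ℝ)) := ENNReal.ofReal_le_ofReal hreal
      _ = 4 * ((j' : ℕ) : ℝ≥0∞) := by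
          rw [ENNReal.ofReal_mul (by norm_num), ENNReal.ofReal_natCast]
          norm_num
  -- p := ν (Iic b)
  set p : ℝ≥0∞ := ν (Set.Iic b) with hpdef
  have hqp : q + p = 1 := by
    have h := measure_add_measure_compl (μ := ν) (measurableSet_Ioi (a := b))
    rwa [Set.compl_Ioi, measure_univ] at h
  have hp_eq : p = ENNReal.ofReal (1 - qq) := by
    have hp_ne_top : p ≠ ∞ := measure_ne_top ν _
    have : p.toReal = 1 - qq := by
      have h1 : (q + p).toReal = 1 := by rw [hqp]; simp
      rw [ENNReal.toReal_add hq_ne_top hp_ne_top] at h1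
      linarith
    rw [← this, ENNReal.ofReal_toReal hp_ne_top]
  -- decompose the measure of the sum event
  rw [pim_sumlt_eq ν b t, Finset.mul_sum]
  have hsplit : ∑ j ∈ Finset.range (n + 1), ν (Set.Iio a) ^ k * pim ν n (Ejset b j t)
      = (∑ j ∈ Finset.range (m₀ + 1), ν (Set.Iio a) ^ k * pim ν n (Ejset b j t))
        + ∑ j ∈ Finset.Ico (m₀ + 1) (n + 1), ν (Set.Iio a) ^ k * pim ν n (Ejset b j t) := by
    rw [Finset.range_eq_Ico, Finset.range_eq_Ico]
    exact (Finset.sum_Ico_consecutive (fun j => ν (Set.Iio a) ^ k * pim ν n (Ejset b j t)) (Nat.zero_le (m₀ + 1)) (by omega : m₀ + 1 ≤ n + 1)).symm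
  rw [hsplit]
  refine add_le_add ?term1 ?term2
  case term1 =>
    -- Chernoff part
    have hstep1 : ∀ j ∈ Finset.range (m₀ + 1),
        ν (Set.Iio a) ^ k * pim ν n (Ejset b j t)
          ≤ ν (Set.Iio a) ^ k * pim ν n (Fjset b j) := fun j _ =>
      mul_le_mul_right (measure_mono (Ejset_subset_Fjset b j t)) _
    refine le_trans (Finset.sum_le_sum hstep1) ?_
    rw [← Finset.mul_sum]
    refine mul_le_mul_right ?_ _
    have hterm : ∀ j ∈ Finset.range (m₀ + 1),
        pim ν n (Fjset b j)
          = ENNReal.ofReal ((n.choose j : ℝ) * qq ^ j * (1 - qq) ^ (n - j)) := by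
      intro j _
      have e1 : ν (Set.Ioi b) = ENNReal.ofReal qq := (ENNReal.ofReal_toReal hq_ne_top).symm
      have e2 : ν (Set.Iic b) = ENNReal.ofReal (1 - qq) := hp_eq
      rw [pim_Fjset ν b j, e1, e2,
        show ((n.choose j : ℝ)) * qq ^ j * (1 - qq) ^ (n - j)
          = ((n.choose j : ℝ)) * (qq ^ j * (1 - qq) ^ (n - j)) from by ring,
        ENNReal.ofReal_mul (Nat.cast_nonneg _), ENNReal.ofReal_mul (pow_nonneg hqq0 _),
        ENNReal.ofReal_pow hqq0, ENNReal.ofReal_pow (by linarith : (0:ℝ) ≤ 1 - qq),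
        ENNReal.ofReal_natCast]
    rw [Finset.sum_congr rfl hterm, ← ENNReal.ofReal_sum_of_nonneg
      (fun j _ => by
        have h1q : (0:ℝ) ≤ 1 - qq := by linarith
        positivity)]
    refine ENNReal.ofReal_le_ofReal ?_
    exact chernoff_real hqq0 hqq1 hm₀r hm₀n
  case term2 =>
    -- main part via the chain
    have hstep2 : ∀ j ∈ Finset.Ico (m₀ + 1) (n + 1),
        ν (Set.Iio a) ^ k * pim ν n (Ejset b j t)
          ≤ 4 ^ k * pim ν n (Ejset b (j - k) (t - (k : ℝ) * (b - a))) := by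
      intro j hj
      rw [Finset.mem_Ico] at hj
      exact Ejset_chain ν hab k t (by omega) (hgood j hj.1 (by omega))
    refine le_trans (Finset.sum_le_sum hstep2) ?_
    rw [← Finset.mul_sum]
    refine mul_le_mul_right ?_ _
    -- reindex and bound by the full sum
    have hinj : Set.InjOn (fun j => j - k) (Finset.Ico (m₀ + 1) (n + 1)) := by
      intro x hx y hy hxy
      rw [Finset.coe_Ico, Set.mem_Ico] at hx hy
      simp only at hxy
      omega
    rw [← Finset.sum_image (f := fun j => pim ν n (Ejset b j (t - (k : ℝ) * (b - a))))
      (g := fun j => j - k) (fun x hx y hy hxy => hinj hx hy hxy)]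
    have himg : Finset.image (fun j => j - k) (Finset.Ico (m₀ + 1) (n + 1))
        ⊆ Finset.range (n + 1) := by
      intro x hx
      rw [Finset.mem_image] at hx
      obtain ⟨j, hj, rfl⟩ := hx
      rw [Finset.mem_Ico] at hj
      rw [Finset.mem_range]
      omega
    refine le_trans (Finset.sum_le_sum_of_subset himg) ?_
    rw [← pim_sumlt_eq ν b (t - (k : ℝ) * (b - a))]
    refine measure_mono fun x hx => ?_
    simp only [Set.mem_setOf_eq] at hx ⊢
    linarith

end Key

/-! ### Existence of the two thresholds -/

lemma exists_ab (ν : Measure ℝ) [IsProbabilityMeasure ν] (h0 : ν (Set.Iio 0) = 0)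
    (hnd : ∀ x : ℝ, ν {x} ≠ 1) :
    ∃ a b : ℝ, a < b ∧ 0 < ν (Set.Iio a) ∧ 0 < ν (Set.Ioi b) := by
  classical
  set A : Set ℝ := {s | 0 < ν (Set.Iio s)} with hA
  have hAne : A.Nonempty := by
    by_contra h
    rw [Set.not_nonempty_iff_eq_empty] at h
    have hz : ∀ s : ℝ, ν (Set.Iio s) = 0 := by
      intro s
      by_contra hs
      have : s ∈ A := pos_iff_ne_zero.mpr hs
      rw [h] at this
      exact this
    have huniv : ν Set.univ = 0 := by
      have hU : (Set.univ : Set ℝ) = ⋃ k : ℕ, Set.Iio (k : ℝ) := by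
        ext x
        simp only [Set.mem_univ, true_iff, Set.mem_iUnion, Set.mem_Iio]
        exact exists_nat_gt x
      rw [hU]
      exact measure_iUnion_null fun k => hz _
    rw [measure_univ] at huniv
    exact one_ne_zero huniv
  have hAbdd : BddBelow A := by
    refine ⟨0, fun s hs => ?_⟩
    by_contra hneg
    push_neg at hneg
    have hle : ν (Set.Iio s) ≤ ν (Set.Iio 0) := measure_mono (Set.Iio_subset_Iio hneg.le)
    rw [h0, le_zero_iff] at hle
    have hs' : 0 < ν (Set.Iio s) := hs
    exact absurd hle (by simpa using ne_of_gt hs')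
  set m := sInf A with hm
  have hlt : ∀ s, m < s → 0 < ν (Set.Iio s) := by
    intro s hs
    obtain ⟨s', hs'A, hs's⟩ := (csInf_lt_iff hAbdd hAne).mp hs
    exact lt_of_lt_of_le hs'A (measure_mono (Set.Iio_subset_Iio hs's.le))
  have hmnull : ν (Set.Iio m) = 0 := by
    have hsub : Set.Iio m = ⋃ k : ℕ, Set.Iio (m - 1/((k:ℝ)+1)) := by
      ext x
      simp only [Set.mem_Iio, Set.mem_iUnion]
      constructor
      · intro hx
        obtain ⟨k, hk⟩ := exists_nat_one_div_lt (by linarith : (0:ℝ) < m - x)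
        exact ⟨k, by push_cast at hk ⊢; linarith⟩
      · rintro ⟨k, hk⟩
        have hp : 0 < 1/((k:ℝ)+1) := by positivity
        linarith
    rw [hsub]
    refine measure_iUnion_null fun k => ?_
    by_contra hk
    have hmem : m - 1/((k:ℝ)+1) ∈ A := pos_iff_ne_zero.mpr hk
    have hle := csInf_le hAbdd hmem
    have hp : 0 < 1/((k:ℝ)+1) := by positivity
    rw [← hm] at hle
    linarith
  have hb : ∃ bb, m < bb ∧ 0 < ν (Set.Ioi bb) := by
    by_contra h
    push_neg at h
    have hIoi : ν (Set.Ioi m) = 0 := by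
      have hsub : Set.Ioi m = ⋃ k : ℕ, Set.Ioi (m + 1/((k:ℝ)+1)) := by
        ext x
        simp only [Set.mem_Ioi, Set.mem_iUnion]
        constructor
        · intro hx
          obtain ⟨k, hk⟩ := exists_nat_one_div_lt (by linarith : (0:ℝ) < x - m)
          exact ⟨k, by push_cast at hk ⊢; linarith⟩
        · rintro ⟨k, hk⟩
          have hp : 0 < 1/((k:ℝ)+1) := by positivity
          linarith
      rw [hsub]
      refine measure_iUnion_null fun k => ?_
      have hp : (0:ℝ) < 1/((k:ℝ)+1) := by positivity
      exact le_zero_iff.mp (h _ (by linarith))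
    have hsing : ν {m} = 1 := by
      have hc : ({m} : Set ℝ)ᶜ = Set.Iio m ∪ Set.Ioi m := Set.Iio_union_Ioi.symm
      have h1 : ν ({m}ᶜ) = 0 := by
        rw [hc]
        exact measure_union_null hmnull hIoi
      have h2 := measure_add_measure_compl (μ := ν) (MeasurableSet.singleton m)
      rw [h1, measure_univ, add_zero] at h2
      exact h2
    exact hnd m hsing
  obtain ⟨bb, hmb, hbb⟩ := hb
  exact ⟨(m + bb)/2, bb, by linarith, hlt _ (by linarith), hbb⟩

/-! ### Transfer from iid to the product measure -/

lemma map_pi {Ω : Type*} [MeasurableSpace Ω] (μ : Measure Ω) [IsProbabilityMeasure μ]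
    (X : ℕ → Ω → ℝ) (hXmeas : ∀ i, Measurable (X i))
    (hind : ProbabilityTheory.iIndepFun X μ)
    (hid : ∀ i, Measure.map (X i) μ = Measure.map (X 0) μ) (n : ℕ) :
    Measure.map (fun ω (i : Fin n) => X i ω) μ = pim (Measure.map (X 0) μ) n := by
  classical
  have hFmeas : Measurable (fun ω (i : Fin n) => X i ω) :=
    measurable_pi_lambda _ fun i => hXmeas i
  rw [pim]
  refine (Measure.pi_eq fun s hs => ?_).symm
  rw [Measure.map_apply hFmeas (MeasurableSet.univ_pi hs)]
  set sets : ℕ → Set ℝ := fun i => if h : i < n then s ⟨i, h⟩ else Set.univ with hsets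
  have hsets_meas : ∀ i, MeasurableSet (sets i) := by
    intro i
    by_cases h : i < n
    · simpa [hsets, h] using hs _
    · simp [hsets, h]
  have hpre : (fun ω (i : Fin n) => X i ω) ⁻¹' (Set.univ.pi s)
      = ⋂ i ∈ Finset.range n, X i ⁻¹' sets i := by
    ext ω
    simp only [Set.mem_preimage, Set.mem_pi, Set.mem_univ, forall_true_left, Set.mem_iInter,
      Finset.mem_range]
    constructor
    · intro h i hi
      simpa [hsets, hi] using h ⟨i, hi⟩
    · intro h i
      have := h i i.isLt
      simpa [hsets, i.isLt] using this
  rw [hpre, hind.measure_inter_preimage_eq_mul (Finset.range n) (fun i _ => hsets_meas i)]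
  have hterm : ∀ i ∈ Finset.range n, μ (X i ⁻¹' sets i) = (Measure.map (X 0) μ) (sets i) := by
    intro i hi
    rw [← hid i, Measure.map_apply (hXmeas i) (hsets_meas i)]
  rw [Finset.prod_congr rfl hterm,
    ← Fin.prod_univ_eq_prod_range (fun i => (Measure.map (X 0) μ) (sets i)) n]
  refine Finset.prod_congr rfl fun i _ => ?_
  congr 1
  simp only [hsets, i.isLt, dif_pos]

end GapProof

open MeasureTheory ProbabilityTheory GapProof
open scoped ENNReal

/-- Let `X 0, X 1, …` be finite nonnegative i.i.d. real random variables
whose common distribution is not concentrated on a point, `S n = ∑_{i<n} X i`, and fix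
`c > 0`.  Then there are constants `δ > 0` and `C > 0` such that for every `ε ∈ (0,1)`
there is `n ≥ 1` with `n ≤ C (log (1/ε) + 1)` such that for every real `t`, if
`P(S n < t) > ε` then `P(S n < t - c) > δ P(S n < t)`. -/
theorem gap_combined {Ω : Type*} [MeasurableSpace Ω]
    (μ : Measure Ω) [IsProbabilityMeasure μ] (X : ℕ → Ω → ℝ)
    (hXmeas : ∀ i, Measurable (X i))
    (hXnonneg : ∀ i ω, 0 ≤ X i ω)
    (hind : iIndepFun X μ)
    (hid : ∀ i, Measure.map (X i) μ = Measure.map (X 0) μ)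
    (hnondeg : ∀ a : ℝ, μ {ω | X 0 ω = a} ≠ 1)
    (c : ℝ) (hc : 0 < c) :
    ∃ δ : ℝ, 0 < δ ∧ ∃ C : ℝ, 0 < C ∧ ∀ ε : ℝ, 0 < ε → ε < 1 →
      ∃ n : ℕ, 0 < n ∧ (n : ℝ) ≤ C * (Real.log (1 / ε) + 1) ∧
        ∀ t : ℝ, ENNReal.ofReal ε < μ {ω | (∑ i ∈ Finset.range n, X i ω) < t} →
          δ * (μ {ω | (∑ i ∈ Finset.range n, X i ω) < t}).toReal <
            (μ {ω | (∑ i ∈ Finset.range n, X i ω) < t - c}).toReal := by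
  classical
  set ν := Measure.map (X 0) μ with hν
  haveI : IsProbabilityMeasure ν := Measure.isProbabilityMeasure_map (hXmeas 0).aemeasurable
  have h0 : ν (Set.Iio 0) = 0 := by
    rw [hν, Measure.map_apply (hXmeas 0) measurableSet_Iio]
    have hempty : X 0 ⁻¹' Set.Iio 0 = ∅ := by
      ext ω
      simp only [Set.mem_preimage, Set.mem_Iio, Set.mem_empty_iff_false, iff_false, not_lt]
      exact hXnonneg 0 ω
    rw [hempty, measure_empty]
  have hnd : ∀ x : ℝ, ν {x} ≠ 1 := by
    intro x
    rw [hν, Measure.map_apply (hXmeas 0) (MeasurableSet.singleton x)]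
    have hpre : X 0 ⁻¹' {x} = {ω | X 0 ω = x} := by
      ext ω; simp
    rw [hpre]
    exact hnondeg x
  obtain ⟨a, b, hab, hra, hqb⟩ := exists_ab ν h0 hnd
  set rr := (ν (Set.Iio a)).toReal with hrr
  set qq := (ν (Set.Ioi b)).toReal with hqq
  have hrfin : ν (Set.Iio a) ≠ ∞ := measure_ne_top _ _
  have hqfin : ν (Set.Ioi b) ≠ ∞ := measure_ne_top _ _
  have hrr0 : 0 < rr := ENNReal.toReal_pos (ne_of_gt hra) hrfin
  have hqq0 : 0 < qq := ENNReal.toReal_pos (ne_of_gt hqb) hqfin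
  set k := max 1 (Nat.ceil (c / (b - a))) with hk
  have hk1 : 1 ≤ k := le_max_left _ _
  have hba : (0:ℝ) < b - a := by linarith
  have hkc : c ≤ (k : ℝ) * (b - a) := by
    have h1 : c / (b - a) ≤ (Nat.ceil (c / (b - a)) : ℝ) := Nat.le_ceil _
    have h2 : ((Nat.ceil (c / (b - a)) : ℕ) : ℝ) ≤ (k : ℝ) := by
      exact_mod_cast le_max_right 1 (Nat.ceil (c / (b - a)))
    have h3 : c / (b - a) ≤ (k : ℝ) := le_trans h1 h2
    calc c = (c / (b - a)) * (b - a) := by field_simp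
      _ ≤ (k : ℝ) * (b - a) := mul_le_mul_of_nonneg_right h3 hba.le
  refine ⟨rr ^ k / (2 * 4 ^ k), by positivity,
    (8 * ((k : ℝ) + 1) + 12) / qq + 1, by positivity, ?_⟩
  intro ε hε0 hε1
  set L := Real.log (1 / ε) with hL
  have hL0 : 0 < L := Real.log_pos (by rw [lt_div_iff₀ hε0]; linarith)
  set n := Nat.ceil ((8 * ((k : ℝ) + 1) + 12 * (L + 1)) / qq) with hn
  have harg0 : (0:ℝ) < (8 * ((k : ℝ) + 1) + 12 * (L + 1)) / qq := by positivity
  have hnpos : 0 < n := Nat.ceil_pos.mpr harg0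
  have hnlow : (8 * ((k : ℝ) + 1) + 12 * (L + 1)) ≤ qq * n := by
    have h1 : (8 * ((k : ℝ) + 1) + 12 * (L + 1)) / qq ≤ (n : ℝ) := Nat.le_ceil _
    calc (8 * ((k : ℝ) + 1) + 12 * (L + 1))
        = qq * ((8 * ((k : ℝ) + 1) + 12 * (L + 1)) / qq) := by field_simp
      _ ≤ qq * n := mul_le_mul_of_nonneg_left h1 hqq0.le
  have hn1 : 8 * ((k : ℝ) + 1) ≤ qq * n := by nlinarith
  have hn2 : Real.exp (-(qq * n) / 12) ≤ ε / 2 := by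
    have h1 : L + 1 ≤ qq * n / 12 := by linarith
    have h2 : Real.exp (-(qq * n) / 12) ≤ Real.exp (-(L + 1)) := by
      rw [Real.exp_le_exp]; linarith
    have h3 : Real.exp (-(L + 1)) = ε * Real.exp (-1) := by
      rw [show -(L + 1) = -L + -1 by ring, Real.exp_add]
      congr 1
      rw [hL, one_div, Real.log_inv]
      rw [neg_neg, Real.exp_log hε0]
    have h4 : Real.exp (-1 : ℝ) ≤ 1 / 2 := by
      rw [Real.exp_neg]
      rw [inv_le_comm₀ (Real.exp_pos 1) (by norm_num)]
      have := Real.exp_one_gt_d9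
      linarith
    calc Real.exp (-(qq * n) / 12) ≤ ε * Real.exp (-1) := by rw [← h3]; exact h2
      _ ≤ ε * (1/2) := mul_le_mul_of_nonneg_left h4 hε0.le
      _ = ε / 2 := by ring
  refine ⟨n, hnpos, ?_, ?_⟩
  · -- n ≤ C (L + 1)
    have h1 : (n : ℝ) < (8 * ((k : ℝ) + 1) + 12 * (L + 1)) / qq + 1 :=
      Nat.ceil_lt_add_one harg0.le
    have h2 : (8 * ((k : ℝ) + 1) + 12 * (L + 1)) / qq
        = (8 * ((k : ℝ) + 1)) / qq + (12 / qq) * (L + 1) := by field_simp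
    have h3 : (8 * ((k : ℝ) + 1)) / qq ≤ ((8 * ((k : ℝ) + 1)) / qq) * (L + 1) := by
      nlinarith [div_nonneg (by positivity : (0:ℝ) ≤ 8 * ((k : ℝ) + 1)) hqq0.le]
    have h4 : (1:ℝ) ≤ L + 1 := by linarith
    have h5 : ((8 * ((k : ℝ) + 1) + 12) / qq + 1) * (L + 1)
        = ((8 * ((k : ℝ) + 1)) / qq) * (L + 1) + (12/qq) * (L + 1) + (L + 1) := by
      field_simp
    linarith
  · intro t hPt
    -- transfer to the product space
    have hFmeas : Measurable (fun ω (i : Fin n) => X i ω) :=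
      measurable_pi_lambda _ fun i => hXmeas i
    have htr : ∀ s : ℝ, μ {ω | (∑ i ∈ Finset.range n, X i ω) < s}
        = pim ν n {x | ∑ i, x i < s} := by
      intro s
      rw [hν, ← map_pi μ X hXmeas hind hid n,
        Measure.map_apply hFmeas (measurableSet_sumlt s)]
      congr 1
      ext ω
      simp only [Set.mem_preimage, Set.mem_setOf_eq,
        Fin.sum_univ_eq_sum_range (fun i => X i ω) n]
    rw [htr t] at hPt
    rw [htr t, htr (t - c)]
    set P := pim ν n {x | ∑ i, x i < t} with hP
    set P' := pim ν n {x | ∑ i, x i < t - c} with hP'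
    have hkey := key_ineq ν hab hkc (n := n) (by exact_mod_cast hn1) t
    rw [← hP, ← hP'] at hkey
    have hchern : ENNReal.ofReal (Real.exp (-((ν (Set.Ioi b)).toReal * n) / 12))
        ≤ ENNReal.ofReal (ε / 2) := ENNReal.ofReal_le_ofReal (by rw [← hqq]; exact hn2)
    have hkey2 : ν (Set.Iio a) ^ k * P
        ≤ ν (Set.Iio a) ^ k * ENNReal.ofReal (ε / 2) + 4 ^ k * P' :=
      le_trans hkey (add_le_add (mul_le_mul_right hchern _) le_rfl)
    -- double it
    have hdouble : 2 * (ν (Set.Iio a) ^ k * ENNReal.ofReal (ε / 2))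
        = ν (Set.Iio a) ^ k * ENNReal.ofReal ε := by
      rw [show (2 : ℝ≥0∞) * (ν (Set.Iio a) ^ k * ENNReal.ofReal (ε / 2))
        = ν (Set.Iio a) ^ k * (2 * ENNReal.ofReal (ε / 2)) from by ring]
      congr 1
      rw [two_mul, ← ENNReal.ofReal_add (by linarith) (by linarith)]
      congr 1
      ring
    have hrk0 : ν (Set.Iio a) ^ k ≠ 0 := pow_ne_zero _ (ne_of_gt hra)
    have hrkt : ν (Set.Iio a) ^ k ≠ ∞ := ENNReal.pow_ne_top hrfin
    have hstrict : ν (Set.Iio a) ^ k * ENNReal.ofReal ε < ν (Set.Iio a) ^ k * P :=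
      (ENNReal.mul_lt_mul_iff_right hrk0 hrkt).mpr hPt
    have h2k : 2 * (ν (Set.Iio a) ^ k * P)
        < ν (Set.Iio a) ^ k * P + 2 * (4 ^ k * P') := by
      calc 2 * (ν (Set.Iio a) ^ k * P)
          ≤ 2 * (ν (Set.Iio a) ^ k * ENNReal.ofReal (ε / 2) + 4 ^ k * P') :=
            mul_le_mul_right hkey2 _
        _ = ν (Set.Iio a) ^ k * ENNReal.ofReal ε + 2 * (4 ^ k * P') := by
            rw [mul_add, hdouble]
        _ < ν (Set.Iio a) ^ k * P + 2 * (4 ^ k * P') := by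
            exact ENNReal.add_lt_add_right
              (by
                refine ENNReal.mul_ne_top (by norm_num) ?_
                exact ENNReal.mul_ne_top (ENNReal.pow_ne_top (by norm_num)) (measure_ne_top _ _))
              hstrict
    have hcancel : ν (Set.Iio a) ^ k * P < 2 * (4 ^ k * P') := by
      have hfin : ν (Set.Iio a) ^ k * P ≠ ∞ := ENNReal.mul_ne_top hrkt (measure_ne_top _ _)
      have h2m : 2 * (ν (Set.Iio a) ^ k * P)
          = ν (Set.Iio a) ^ k * P + ν (Set.Iio a) ^ k * P := two_mul _
      rw [h2m] at h2k
      exact (ENNReal.add_lt_add_iff_left hfin).mp h2k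
    -- to reals
    have hrhs_ne_top : 2 * (4 ^ k * P') ≠ ∞ :=
      ENNReal.mul_ne_top (by norm_num)
        (ENNReal.mul_ne_top (ENNReal.pow_ne_top (by norm_num)) (measure_ne_top _ _))
    have htR := ENNReal.toReal_strict_mono hrhs_ne_top hcancel
    rw [ENNReal.toReal_mul, ENNReal.toReal_mul, ENNReal.toReal_mul, ENNReal.toReal_pow,
      ENNReal.toReal_pow] at htR
    simp only [ENNReal.toReal_ofNat] at htR
    rw [← hrr] at htR
    -- htR : rr^k * P.toReal < 2 * (4^k * P'.toReal)
    have h4k0 : (0:ℝ) < 2 * 4 ^ k := by positivity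
    rw [div_mul_eq_mul_div, div_lt_iff₀ h4k0]
    calc rr ^ k * P.toReal < 2 * (4 ^ k * P'.toReal) := htR
      _ = P'.toReal * (2 * 4 ^ k) := by ring
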